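/- arXiv:2106.04114 — 4 statements merged into one kernel-verified Lean document; each statement's English description precedes it below -/
import Mathlib

section
/- (U_add ≤ U_mult.) Let r ∈ ℝ, σ > 0, λ > 0, T ≥ 1. Let r₁, …, r_T be i.i.d. random variables with distribution N(r, σ²), and let S₁, …, S_T be strictly positive random variables such that S_t is measurable with respect to r₁, …, r_{t−1} (as in geometric Brownian motion). Set a_t = r_t·S_t², and assume Σ_t a_t² > 0 almost surely. Then U_add := (r²/(2λσ²T))·E[ ((Σ_t a_t)²/(Σ_t a_t²))·Θ(Σ_t a_t) ] ≤ (r²/(2λσ²))·Φ(r/σ) =: U_mult. -/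
open MeasureTheory ProbabilityTheory

/-- The cumulative distribution function `Φ` of the standard normal distribution. -/
noncomputable def stdNormalCDF (x : ℝ) : ℝ :=
  ((gaussianReal 0 1) (Set.Iic x)).toReal

/-- The Heaviside step function: `Θ(x) = 1` if `x > 0` and `0` otherwise. -/
noncomputable def heaviside (x : ℝ) : ℝ := if 0 < x then 1 else 0

lemma heaviside_nonneg (x : ℝ) : 0 ≤ heaviside x := by
  unfold heaviside; split <;> norm_num

lemma heaviside_le_one (x : ℝ) : heaviside x ≤ 1 := by
  unfold heaviside; split <;> norm_num

lemma measurable_heaviside : Measurable heaviside := by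
  unfold heaviside
  exact Measurable.ite (measurableSet_lt measurable_const measurable_id) measurable_const
    measurable_const

/-- Pointwise Cauchy–Schwarz-type bound. -/
lemma pointwise_bound {n : ℕ} (a : Fin n → ℝ) :
    (∑ t, a t) ^ 2 / (∑ t, (a t) ^ 2) * heaviside (∑ t, a t) ≤ ∑ t, heaviside (a t) := by
  by_cases h : 0 < ∑ t, a t
  · have hh : heaviside (∑ t, a t) = 1 := if_pos h
    rw [hh, mul_one]
    classical
    set P : Finset (Fin n) := Finset.univ.filter (fun t => 0 < a t) with hP
    have hRHS : ∑ t, heaviside (a t) = (P.card : ℝ) := by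
      rw [hP]
      simp [heaviside, Finset.sum_ite, Finset.sum_const]
    rw [hRHS]
    -- sum over all ≤ sum over positives
    have hsplit : ∑ t, a t = (∑ t ∈ P, a t) + ∑ t ∈ Finset.univ.filter (fun t => ¬ 0 < a t), a t := by
      rw [hP]
      exact (Finset.sum_filter_add_sum_filter_not _ _ _).symm
    have hneg : ∑ t ∈ Finset.univ.filter (fun t => ¬ 0 < a t), a t ≤ 0 := by
      apply Finset.sum_nonpos
      intro t ht
      have := (Finset.mem_filter.mp ht).2
      linarith [not_lt.mp this]
    have hle : ∑ t, a t ≤ ∑ t ∈ P, a t := by linarith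
    have h2 : (∑ t, a t) ^ 2 ≤ (∑ t ∈ P, a t) ^ 2 :=
      pow_le_pow_left₀ h.le hle 2
    have h3 : (∑ t ∈ P, a t) ^ 2 ≤ (P.card : ℝ) * ∑ t ∈ P, (a t) ^ 2 :=
      sq_sum_le_card_mul_sum_sq
    have h4 : ∑ t ∈ P, (a t) ^ 2 ≤ ∑ t, (a t) ^ 2 := by
      apply Finset.sum_le_sum_of_subset_of_nonneg (Finset.filter_subset _ _)
      intro t _ _
      positivity
    have h5 : 0 < ∑ t, (a t) ^ 2 := by
      obtain ⟨t, ht⟩ : ∃ t, a t ≠ 0 := by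
        by_contra hc
        push_neg at hc
        simp [hc] at h
      have h6 : (0:ℝ) < (a t) ^ 2 := by positivity
      have h7 : (a t) ^ 2 ≤ ∑ s, (a s) ^ 2 :=
        Finset.single_le_sum (f := fun s => (a s) ^ 2) (fun s _ => by positivity)
          (Finset.mem_univ t)
      linarith
    rw [div_le_iff₀ h5]
    calc (∑ t, a t) ^ 2 ≤ (∑ t ∈ P, a t) ^ 2 := h2
      _ ≤ (P.card : ℝ) * ∑ t ∈ P, (a t) ^ 2 := h3
      _ ≤ (P.card : ℝ) * ∑ t, (a t) ^ 2 := by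
          apply mul_le_mul_of_nonneg_left h4 (by positivity)
  · have hh : heaviside (∑ t, a t) = 0 := if_neg h
    rw [hh, mul_zero]
    exact Finset.sum_nonneg fun t _ => heaviside_nonneg _

/-- The Gaussian `N(r, σ²)` gives mass `Φ(r/σ)` to `(0, ∞)`. -/
lemma gaussian_Ioi (r σ : ℝ) (hσ : 0 < σ) :
    gaussianReal r ⟨σ ^ 2, sq_nonneg σ⟩ (Set.Ioi 0) = gaussianReal 0 1 (Set.Iic (r / σ)) := by
  have h1 : gaussianReal r ⟨σ ^ 2, sq_nonneg σ⟩
      = ((gaussianReal 0 1).map (fun x => σ * x)).map (fun x => x + r) := by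
    rw [show (fun x : ℝ => σ * x) = (σ * ·) from rfl, gaussianReal_map_const_mul,
      show (fun x : ℝ => x + r) = (· + r) from rfl, gaussianReal_map_add_const]
    norm_num
    rfl
  rw [h1, Measure.map_apply (measurable_add_const r) measurableSet_Ioi]
  have hpre1 : (fun x : ℝ => x + r) ⁻¹' Set.Ioi 0 = Set.Ioi (-r) := by
    ext x
    simp only [Set.mem_preimage, Set.mem_Ioi]
    constructor <;> intro <;> linarith
  rw [hpre1, Measure.map_apply (measurable_const_mul σ) measurableSet_Ioi]
  have hpre2 : (fun x : ℝ => σ * x) ⁻¹' Set.Ioi (-r) = Set.Ioi (-(r / σ)) := by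
    ext x
    simp only [Set.mem_preimage, Set.mem_Ioi]
    rw [← neg_div, div_lt_iff₀ hσ]
    constructor <;> intro <;> nlinarith
  rw [hpre2]
  have hmapneg : (gaussianReal 0 1).map (fun x : ℝ => -1 * x) = gaussianReal 0 1 := by
    rw [show (fun x : ℝ => -1 * x) = ((-1 : ℝ) * ·) from rfl, gaussianReal_map_const_mul]
    norm_num
  have hneg : (gaussianReal 0 1) (Set.Ioi (-(r / σ))) = (gaussianReal 0 1) (Set.Iio (r / σ)) := by
    conv_lhs => rw [← hmapneg]
    rw [Measure.map_apply (measurable_const_mul (-1:ℝ)) measurableSet_Ioi]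
    congr 1
    ext x
    simp only [Set.mem_preimage, Set.mem_Ioi, Set.mem_Iio]
    constructor <;> intro <;> linarith
  rw [hneg]
  have h0 : (gaussianReal 0 1) {r / σ} = 0 :=
    gaussianReal_absolutelyContinuous 0 one_ne_zero (measure_singleton _)
  have hIic : (gaussianReal 0 1) (Set.Iic (r / σ)) ≤ (gaussianReal 0 1) (Set.Iio (r / σ)) :=
    calc (gaussianReal 0 1) (Set.Iic (r / σ))
      = (gaussianReal 0 1) (Set.Iio (r / σ) ∪ {r / σ}) := by rw [Set.Iio_union_right]
    _ ≤ (gaussianReal 0 1) (Set.Iio (r / σ)) + (gaussianReal 0 1) {r / σ} :=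
        measure_union_le _ _
    _ = (gaussianReal 0 1) (Set.Iio (r / σ)) := by rw [h0, add_zero]
  exact le_antisymm (measure_mono Set.Iio_subset_Iic_self) hIic

/-- (`U_add ≤ U_mult`.) Let `r₁, …, r_T` be i.i.d. `N(r, σ²)`, and `S₁, …, S_T` strictly
positive with `S_t` measurable w.r.t. `r₁, …, r_{t−1}`; set `a_t = r_t S_t²` and assume
`Σ a_t² > 0` a.s. Then
`U_add = (r²/(2λσ²T))·E[((Σ a_t)²/(Σ a_t²))·Θ(Σ a_t)] ≤ (r²/(2λσ²))·Φ(r/σ) = U_mult`. -/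
theorem additive_le_multiplicative_utility {Ω : Type*} [MeasurableSpace Ω]
    (μ : Measure Ω) [IsProbabilityMeasure μ]
    (r σ lam : ℝ) (hσ : 0 < σ) (hlam : 0 < lam)
    (T : ℕ) (hT : 1 ≤ T)
    (R : Fin T → Ω → ℝ) (hRmeas : ∀ t, Measurable (R t))
    (hindep : iIndepFun R μ)
    (hmap : ∀ t, Measure.map (R t) μ = gaussianReal r ⟨σ ^ 2, sq_nonneg σ⟩)
    (S : Fin T → Ω → ℝ) (hSpos : ∀ t, ∀ ω, 0 < S t ω)
    (hSmeas : ∀ t : Fin T,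
      Measurable[⨆ s : {s : Fin T // s < t}, MeasurableSpace.comap (R s.1) inferInstance]
        (S t))
    (hsq : ∀ᵐ ω ∂μ, 0 < ∑ t, (R t ω * (S t ω) ^ 2) ^ 2) :
    (r ^ 2 / (2 * lam * σ ^ 2 * T))
        * ∫ ω, ((∑ t, R t ω * (S t ω) ^ 2) ^ 2 / (∑ t, (R t ω * (S t ω) ^ 2) ^ 2))
            * heaviside (∑ t, R t ω * (S t ω) ^ 2) ∂μ
      ≤ (r ^ 2 / (2 * lam * σ ^ 2)) * stdNormalCDF (r / σ) := by
  classical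
  -- S t is measurable with respect to the ambient σ-algebra
  have hSm : ∀ t, Measurable (S t) := by
    intro t
    refine (hSmeas t).mono ?_ le_rfl
    exact iSup_le fun s => (hRmeas s.1).comap_le
  have ham : ∀ t, Measurable (fun ω => R t ω * (S t ω) ^ 2) := fun t =>
    (hRmeas t).mul ((hSm t).pow_const 2)
  -- the integral of each Heaviside term
  have hint_t : ∀ t, ∫ ω, heaviside (R t ω * (S t ω) ^ 2) ∂μ = stdNormalCDF (r / σ) := by
    intro t
    have hset : {ω | 0 < R t ω * (S t ω) ^ 2} = R t ⁻¹' Set.Ioi 0 := by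
      ext ω
      simp only [Set.mem_setOf_eq, Set.mem_preimage, Set.mem_Ioi]
      constructor
      · intro h
        by_contra hc
        push_neg at hc
        nlinarith [pow_pos (hSpos t ω) 2]
      · intro h
        exact mul_pos h (pow_pos (hSpos t ω) 2)
    have hmeas : MeasurableSet {ω | 0 < R t ω * (S t ω) ^ 2} := by
      rw [hset]; exact hRmeas t measurableSet_Ioi
    have hind : (fun ω => heaviside (R t ω * (S t ω) ^ 2))
        = Set.indicator {ω | 0 < R t ω * (S t ω) ^ 2} (fun _ => (1:ℝ)) := by
      ext ω
      by_cases h : 0 < R t ω * (S t ω) ^ 2 <;> simp [heaviside, h, Set.indicator_apply]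
    rw [hind, integral_indicator_const _ hmeas, smul_eq_mul, mul_one, measureReal_def, hset,
      ← Measure.map_apply (hRmeas t) measurableSet_Ioi, hmap t, gaussian_Ioi r σ hσ]
    rfl
  have hint_i : ∀ t, Integrable (fun ω => heaviside (R t ω * (S t ω) ^ 2)) μ := by
    intro t
    refine Integrable.mono' (integrable_const (1:ℝ))
      (measurable_heaviside.comp (ham t)).aestronglyMeasurable ?_
    filter_upwards with ω
    rw [Real.norm_eq_abs, abs_of_nonneg (heaviside_nonneg _)]
    exact heaviside_le_one _
  have hgInt : Integrable (fun ω => ∑ t, heaviside (R t ω * (S t ω) ^ 2)) μ :=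
    integrable_finset_sum _ fun t _ => hint_i t
  have hgval : ∫ ω, (∑ t, heaviside (R t ω * (S t ω) ^ 2)) ∂μ = (T : ℝ) * stdNormalCDF (r / σ) := by
    rw [integral_finset_sum _ fun t _ => hint_i t]
    simp only [hint_t]
    rw [Finset.sum_const, Finset.card_univ, Fintype.card_fin, nsmul_eq_mul]
  have hmono : ∫ ω, ((∑ t, R t ω * (S t ω) ^ 2) ^ 2 / (∑ t, (R t ω * (S t ω) ^ 2) ^ 2))
            * heaviside (∑ t, R t ω * (S t ω) ^ 2) ∂μ
      ≤ ∫ ω, (∑ t, heaviside (R t ω * (S t ω) ^ 2)) ∂μ := by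
    refine integral_mono_of_nonneg (Filter.Eventually.of_forall fun ω => ?_) hgInt
      (Filter.Eventually.of_forall fun ω => ?_)
    · exact mul_nonneg (div_nonneg (sq_nonneg _)
        (Finset.sum_nonneg fun t _ => sq_nonneg _)) (heaviside_nonneg _)
    · exact pointwise_bound (fun t => R t ω * (S t ω) ^ 2)
  have hTne : (T : ℝ) ≠ 0 := by positivity
  have hc : (0:ℝ) ≤ r ^ 2 / (2 * lam * σ ^ 2 * T) := by positivity
  calc (r ^ 2 / (2 * lam * σ ^ 2 * T))
        * ∫ ω, ((∑ t, R t ω * (S t ω) ^ 2) ^ 2 / (∑ t, (R t ω * (S t ω) ^ 2) ^ 2))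
            * heaviside (∑ t, R t ω * (S t ω) ^ 2) ∂μ
      ≤ (r ^ 2 / (2 * lam * σ ^ 2 * T)) * ((T : ℝ) * stdNormalCDF (r / σ)) := by
        exact mul_le_mul_of_nonneg_left (hmono.trans_eq hgval) hc
    _ = (r ^ 2 / (2 * lam * σ ^ 2)) * stdNormalCDF (r / σ) := by
        field_simp
end

section
/- (U_no-aug < U_mult.) Let r > 0, σ > 0 and λ > 0. Then (1 − 2Φ(−r/σ))·r − (λ/2)σ² < (r²/(2λσ²))·Φ(r/σ). That is, the expected true utility of the no-data-augmentation strategy is strictly smaller than the expected true utility of the optimally-tuned multiplicative Gaussian noise augmentation strategy. -/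
open MeasureTheory ProbabilityTheory

lemma gr_map_neg : (gaussianReal 0 1).map (fun y : ℝ => -y) = gaussianReal 0 1 := by
  have := gaussianReal_map_const_mul (μ := 0) (v := 1) (-1)
  simpa using this

lemma gr_Iic_lt_top (x : ℝ) : (gaussianReal 0 1) (Set.Iic x) ≠ ⊤ := measure_ne_top _ _

lemma gr_singleton (x : ℝ) : (gaussianReal 0 1) {x} = 0 := by
  apply gaussianReal_absolutelyContinuous 0 (by norm_num)
  simp

lemma stdNormalCDF_symm (x : ℝ) : stdNormalCDF (-x) = 1 - stdNormalCDF x := by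
  unfold stdNormalCDF
  have h1 : (gaussianReal 0 1) (Set.Iic (-x)) = (gaussianReal 0 1) (Set.Ici x) := by
    conv_lhs => rw [← gr_map_neg]
    rw [Measure.map_apply measurable_neg measurableSet_Iic]
    congr 1
    ext y
    simp
  have h2 : (gaussianReal 0 1) (Set.Ici x) = (gaussianReal 0 1) {x} + (gaussianReal 0 1) (Set.Ioi x) := by
    rw [← measure_union (by simp) measurableSet_Ioi]
    congr 1
    rw [Set.union_comm]
    exact (Set.Ioi_union_left).symm
  have h3 : (gaussianReal 0 1) (Set.Ioi x) = 1 - (gaussianReal 0 1) (Set.Iic x) := by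
    rw [← measure_univ (μ := gaussianReal 0 1), ← Set.Iic_union_Ioi (a := x),
      measure_union (Set.Iic_disjoint_Ioi le_rfl) measurableSet_Ioi]
    rw [ENNReal.add_sub_cancel_left (gr_Iic_lt_top x)]
  rw [h1, h2, gr_singleton, zero_add, h3, ENNReal.toReal_sub_of_le (measure_mono (Set.subset_univ _) |>.trans_eq (measure_univ)) (by simp)]
  simp

lemma gr_Ioc_pos {a b : ℝ} (h : a < b) : 0 < (gaussianReal 0 1) (Set.Ioc a b) := by
  by_contra hc
  push_neg at hc
  have h0 : (gaussianReal 0 1) (Set.Ioc a b) = 0 := le_antisymm hc zero_le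
  have := gaussianReal_absolutelyContinuous' 0 (v := 1) (by norm_num) h0
  rw [Real.volume_Ioc] at this
  simp [ENNReal.ofReal_eq_zero] at this
  linarith

lemma stdNormalCDF_strict_mono {a b : ℝ} (h : a < b) : stdNormalCDF a < stdNormalCDF b := by
  unfold stdNormalCDF
  have : (gaussianReal 0 1) (Set.Iic b) = (gaussianReal 0 1) (Set.Iic a) + (gaussianReal 0 1) (Set.Ioc a b) := by
    rw [← measure_union (by exact Set.Iic_disjoint_Ioc le_rfl) measurableSet_Ioc, Set.Iic_union_Ioc_eq_Iic h.le]
  rw [this, ENNReal.toReal_add (gr_Iic_lt_top a) (measure_ne_top _ _)]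
  have := gr_Ioc_pos h
  have hpos : 0 < ((gaussianReal 0 1) (Set.Ioc a b)).toReal :=
    ENNReal.toReal_pos this.ne' (measure_ne_top _ _)
  linarith

lemma stdNormalCDF_zero : stdNormalCDF 0 = 1/2 := by
  have := stdNormalCDF_symm 0
  rw [neg_zero] at this
  linarith

lemma stdNormalCDF_lt_one (x : ℝ) : stdNormalCDF x < 1 := by
  have h := stdNormalCDF_strict_mono (show x < x + 1 by linarith)
  have h2 : stdNormalCDF (x+1) ≤ 1 := by
    unfold stdNormalCDF
    rw [← ENNReal.toReal_one]
    exact ENNReal.toReal_mono (by simp) (measure_mono (Set.subset_univ _) |>.trans_eq measure_univ)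
  linarith

/-- (`U_no-aug < U_mult`.) For `r, σ, λ > 0`, the expected true utility of the
no-data-augmentation strategy is strictly smaller than that of the optimally-tuned
multiplicative Gaussian noise augmentation strategy:
`(1 − 2Φ(−r/σ))·r − (λ/2)σ² < (r²/(2λσ²))·Φ(r/σ)`. -/
theorem no_augmentation_lt_multiplicative_utility
    (r σ lam : ℝ) (hr : 0 < r) (hσ : 0 < σ) (hlam : 0 < lam) :
    (1 - 2 * stdNormalCDF (-r / σ)) * r - (lam / 2) * σ ^ 2
      < (r ^ 2 / (2 * lam * σ ^ 2)) * stdNormalCDF (r / σ) := by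
  have hx : 0 < r / σ := div_pos hr hσ
  set p := stdNormalCDF (r / σ) with hp
  have hsym : stdNormalCDF (-r / σ) = 1 - p := by
    rw [neg_div]; exact stdNormalCDF_symm _
  have hphalf : 1/2 < p := by
    have := stdNormalCDF_strict_mono hx
    rw [stdNormalCDF_zero] at this
    linarith
  have hp1 : p < 1 := stdNormalCDF_lt_one _
  rw [hsym]
  have hd : 0 < 2 * lam * σ ^ 2 := by positivity
  rw [show r ^ 2 / (2 * lam * σ ^ 2) * p = r ^ 2 * p / (2 * lam * σ ^ 2) from by ring, lt_div_iff₀ hd]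
  nlinarith [sq_nonneg (r * (2*p - 1) - lam * σ^2), mul_pos (mul_pos hr hr) (mul_pos (show 0 < 4*p - 1 by linarith) (show 0 < 1 - p by linarith)), sq_nonneg σ, mul_pos hlam (mul_pos hσ hσ)]
end

section
/- (Optimality of the proposed augmentation for stationary portfolios.) Let r > 0, σ > 0, λ > 0, T ≥ 1, let r₁, …, r_T be strictly positive real numbers and S₁, …, S_T strictly positive real numbers. Set the injected-noise variances γ_t² = (σ²/(2r))·r_t·S_t². Then the stationary portfolio obtained by training with this augmentation, π* = (Σ_t r_t)/(2λ·Σ_t γ_t²/S_t²), equals r/(λσ²), and consequently for every π ∈ ℝ, π*·r − (λ/2)σ²(π*)² ≥ π·r − (λ/2)σ²π²; i.e., the trained stationary portfolio maximizes the true utility among all stationary portfolios. -/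
/-- (Optimality of the proposed augmentation for stationary portfolios.) With
injected-noise variances `γ_t² = (σ²/(2r)) r_t S_t²`, the trained stationary portfolio
`π* = (Σ r_t)/(2λ Σ γ_t²/S_t²)` equals `r/(λσ²)` and maximizes the true utility
`π ↦ π r − (λ/2) σ² π²` among all stationary portfolios. -/
theorem proposed_augmentation_stationary_optimal
    (r σ lam : ℝ) (hr : 0 < r) (hσ : 0 < σ) (hlam : 0 < lam)
    (T : ℕ) (hT : 1 ≤ T)
    (ret : Fin T → ℝ) (hret : ∀ t, 0 < ret t)
    (S : Fin T → ℝ) (hS : ∀ t, 0 < S t)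
    (γsq : Fin T → ℝ) (hγsq : ∀ t, γsq t = (σ ^ 2 / (2 * r)) * ret t * (S t) ^ 2) :
    (∑ t, ret t) / (2 * lam * ∑ t, γsq t / (S t) ^ 2) = r / (lam * σ ^ 2) ∧
    ∀ π : ℝ,
      π * r - (lam / 2) * σ ^ 2 * π ^ 2
        ≤ ((∑ t, ret t) / (2 * lam * ∑ t, γsq t / (S t) ^ 2)) * r
          - (lam / 2) * σ ^ 2 * ((∑ t, ret t) / (2 * lam * ∑ t, γsq t / (S t) ^ 2)) ^ 2 := by
  have hsum : (∑ t, γsq t / (S t) ^ 2) = (σ ^ 2 / (2 * r)) * ∑ t, ret t := by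
    rw [Finset.mul_sum]
    apply Finset.sum_congr rfl
    intro t _
    have h := (hS t).ne'
    rw [hγsq t]
    field_simp
  have hpos : 0 < ∑ t, ret t := by
    apply Finset.sum_pos (fun t _ => hret t)
    simpa [Finset.univ_nonempty_iff, ← Fin.pos_iff_nonempty] using Nat.lt_of_succ_le hT
  have hkey : (∑ t, ret t) / (2 * lam * ∑ t, γsq t / (S t) ^ 2) = r / (lam * σ ^ 2) := by
    rw [hsum]
    field_simp
  refine ⟨hkey, fun π => ?_⟩
  rw [hkey]
  have h1 : r / (lam * σ ^ 2) * r - lam / 2 * σ ^ 2 * (r / (lam * σ ^ 2)) ^ 2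
      - (π * r - lam / 2 * σ ^ 2 * π ^ 2)
      = (lam * σ ^ 2 / 2) * (π - r / (lam * σ ^ 2)) ^ 2 := by
    field_simp
    ring
  nlinarith [sq_nonneg (π - r / (lam * σ ^ 2)), mul_pos hlam (mul_pos hσ hσ)]
end

section
/- (Noise injection on the target return is equivalent to an L2 output regularization.) Let r ∈ ℝ, c ≥ 0, σ̂ ≥ 0, let ε be a standard normal random variable, and let Y be a square-integrable real random variable independent of ε (Y is the portfolio output π, which depends only on the noisified past returns). Set Z = r + c·σ̂·√|r|·ε (the noisified target return). Then Var(Z·Y) = r²·Var(Y) + c²·σ̂²·|r|·E[Y²]. In particular, if Y = π is deterministic, then Var(Z·π) = c²·σ̂²·|r|·π², so the risk term contributed by the target-noise injection equals an L2 penalty λ·c²·σ̂²·|r|·π² on the model output. -/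
open MeasureTheory ProbabilityTheory
open scoped ENNReal NNReal

section GaussianAux
open Real

lemma gaussianPDFReal_zero_one (x : ℝ) :
    gaussianPDFReal 0 1 x = (Real.sqrt (2 * π))⁻¹ * rexp (-(2⁻¹) * x ^ 2) := by
  simp only [gaussianPDFReal, NNReal.coe_one, mul_one, sub_zero]
  congr 1
  ring

lemma integral_sq_exp_half : ∫ x : ℝ, x ^ 2 * rexp (-(2⁻¹) * x ^ 2) = Real.sqrt (2 * π) := by
  have h1 : (fun x : ℝ => x ^ 2 * rexp (-(2⁻¹) * x ^ 2))
      = fun x : ℝ => |x| ^ 2 * rexp (-(2⁻¹) * |x| ^ 2) := by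
    funext x; rw [sq_abs]
  rw [h1, integral_comp_abs (f := fun x : ℝ => x ^ 2 * rexp (-(2⁻¹) * x ^ 2))]
  have h2 : ∫ x in Set.Ioi (0:ℝ), x ^ 2 * rexp (-(2⁻¹) * x ^ 2)
      = ∫ x in Set.Ioi (0:ℝ), x ^ (2:ℝ) * rexp (-(2⁻¹) * x ^ (2:ℝ)) := by
    norm_num [Real.rpow_natCast]
  rw [h2, integral_rpow_mul_exp_neg_mul_rpow two_pos (by norm_num) (by norm_num : (0:ℝ) < 2⁻¹)]
  have hG : Real.Gamma ((2 + 1) / 2) = Real.sqrt π / 2 := by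
    have : ((2:ℝ) + 1) / 2 = 1/2 + 1 := by norm_num
    rw [this, Real.Gamma_add_one (by norm_num), Real.Gamma_one_half_eq]
    ring
  have h3 : ((2:ℝ)⁻¹) ^ (-(2 + 1) / 2 : ℝ) = 2 * Real.sqrt 2 := by
    rw [Real.inv_rpow (by norm_num), ← Real.rpow_neg (by norm_num), neg_div, neg_neg]
    rw [show ((2:ℝ) + 1) / 2 = 1 + 1/2 by norm_num, Real.rpow_add (by norm_num),
      Real.rpow_one, ← Real.sqrt_eq_rpow]
  rw [hG, h3]
  rw [show Real.sqrt (2 * π) = Real.sqrt 2 * Real.sqrt π from Real.sqrt_mul (by norm_num) _]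
  ring

lemma gaussianReal_zero_one_eq :
    gaussianReal 0 1 = volume.withDensity (fun x => ((gaussianPDFReal 0 1 x).toNNReal : ℝ≥0∞)) := by
  rw [gaussianReal_of_var_ne_zero 0 one_ne_zero]
  rfl

lemma integral_gaussianReal_zero_one (f : ℝ → ℝ) :
    ∫ x, f x ∂(gaussianReal 0 1) = ∫ x, gaussianPDFReal 0 1 x * f x := by
  rw [gaussianReal_zero_one_eq,
    integral_withDensity_eq_integral_smul (measurable_gaussianPDFReal 0 1).real_toNNReal f]
  congr 1
  funext x
  rw [NNReal.smul_def, smul_eq_mul, Real.coe_toNNReal _ (gaussianPDFReal_nonneg 0 1 x)]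

lemma integrable_gaussianReal_iff (f : ℝ → ℝ) :
    Integrable f (gaussianReal 0 1) ↔ Integrable (fun x => gaussianPDFReal 0 1 x * f x) volume := by
  rw [gaussianReal_zero_one_eq,
    integrable_withDensity_iff_integrable_smul (measurable_gaussianPDFReal 0 1).real_toNNReal]
  have : (fun x => (gaussianPDFReal 0 1 x).toNNReal • f x)
      = fun x => gaussianPDFReal 0 1 x * f x := by
    funext x
    rw [NNReal.smul_def, smul_eq_mul, Real.coe_toNNReal _ (gaussianPDFReal_nonneg 0 1 x)]
  rw [this]

lemma integrable_sq_gaussianReal : Integrable (fun x : ℝ => x ^ 2) (gaussianReal 0 1) := by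
  rw [integrable_gaussianReal_iff]
  have h := (integrable_rpow_mul_exp_neg_mul_sq (by norm_num : (0:ℝ) < 2⁻¹)
    (by norm_num : (-1:ℝ) < 2)).const_mul ((Real.sqrt (2 * π))⁻¹)
  refine h.congr (Filter.Eventually.of_forall fun x => ?_)
  simp only [gaussianPDFReal_zero_one]
  norm_num [Real.rpow_natCast]
  try ring

lemma integral_sq_gaussianReal : ∫ x, x ^ 2 ∂(gaussianReal 0 1) = 1 := by
  rw [integral_gaussianReal_zero_one]
  have : (fun x : ℝ => gaussianPDFReal 0 1 x * x ^ 2)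
      = fun x => (Real.sqrt (2 * π))⁻¹ * (x ^ 2 * rexp (-(2⁻¹) * x ^ 2)) := by
    funext x; rw [gaussianPDFReal_zero_one]; ring
  rw [this, integral_const_mul, integral_sq_exp_half, inv_mul_cancel₀]
  positivity

lemma memℒp_two_id_gaussianReal : MemLp (fun x : ℝ => x) 2 (gaussianReal 0 1) := by
  refine (memLp_two_iff_integrable_sq ?_).mpr integrable_sq_gaussianReal
  exact aestronglyMeasurable_id

lemma integral_id_gaussianReal : ∫ x, x ∂(gaussianReal 0 1) = 0 := by
  rw [integral_gaussianReal_zero_one]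
  set g : ℝ → ℝ := fun x => gaussianPDFReal 0 1 x * x with hg
  have A : MeasurableEmbedding fun x : ℝ => -x :=
    (Homeomorph.neg ℝ).isClosedEmbedding.measurableEmbedding
  have h1 : ∫ x, g x = ∫ x, g (-x) := by
    rw [← A.integral_map, Measure.map_neg_eq_self (volume : Measure ℝ)]
  have h2 : (fun x => g (-x)) = fun x => -g x := by
    funext x
    simp only [hg, gaussianPDFReal_zero_one, neg_sq]
    ring
  rw [h2, integral_neg] at h1
  linarith

end GaussianAux

lemma indepFun_const_left {Ω : Type*} [MeasurableSpace Ω] {μ : Measure Ω} [IsProbabilityMeasure μ]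
    (c : ℝ) (g : Ω → ℝ) : IndepFun (fun _ => c) g μ := by
  rw [indepFun_iff_measure_inter_preimage_eq_mul]
  intro s t hs ht
  by_cases hc : c ∈ s
  · have h : (fun _ : Ω => c) ⁻¹' s = Set.univ := by ext; simp [hc]
    simp [h, Set.univ_inter]
  · have h : (fun _ : Ω => c) ⁻¹' s = ∅ := by ext; simp [hc]
    simp [h]

lemma noise_variance_aux {Ω : Type*} [MeasurableSpace Ω] (μ : Measure Ω) [IsProbabilityMeasure μ]
    (r a : ℝ) (ε Y : Ω → ℝ) (hε : Measurable ε)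
    (hεmap : Measure.map ε μ = gaussianReal 0 1)
    (hY : MemLp Y 2 μ) (hindep : IndepFun Y ε μ) :
    variance (fun ω => (r + a * ε ω) * Y ω) μ
      = r ^ 2 * variance Y μ + a ^ 2 * ∫ ω, (Y ω) ^ 2 ∂μ := by
  have hεae : AEMeasurable ε μ := hε.aemeasurable
  have hεm2 : MemLp ε 2 μ := by
    have h := memℒp_two_id_gaussianReal
    rw [← hεmap] at h
    exact (memLp_map_measure_iff aestronglyMeasurable_id hεae).mp h
  have Eε : ∫ ω, ε ω ∂μ = 0 := by
    have h : ∫ x, x ∂(Measure.map ε μ) = ∫ ω, ε ω ∂μ :=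
      integral_map hεae aestronglyMeasurable_id
    rw [hεmap] at h
    rw [← h]
    exact _root_.integral_id_gaussianReal
  have Eε2 : ∫ ω, (ε ω) ^ 2 ∂μ = 1 := by
    have h : ∫ x, x ^ 2 ∂(Measure.map ε μ) = ∫ ω, (ε ω) ^ 2 ∂μ :=
      integral_map hεae ((measurable_id.pow_const 2).aestronglyMeasurable)
    rw [hεmap] at h
    rw [← h]
    exact integral_sq_gaussianReal
  have intY : Integrable Y μ := hY.integrable one_le_two
  have intY2 : Integrable (fun ω => Y ω ^ 2) μ := hY.integrable_sq
  have intε : Integrable ε μ := hεm2.integrable one_le_two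
  have intε2 : Integrable (fun ω => ε ω ^ 2) μ := hεm2.integrable_sq
  have indep2 : IndepFun (fun ω => Y ω ^ 2) ε μ :=
    hindep.comp (measurable_id.pow_const 2) measurable_id
  have indep22 : IndepFun (fun ω => Y ω ^ 2) (fun ω => ε ω ^ 2) μ :=
    hindep.comp (measurable_id.pow_const 2) (measurable_id.pow_const 2)
  have hYε : ∫ ω, Y ω * ε ω ∂μ = (∫ ω, Y ω ∂μ) * ∫ ω, ε ω ∂μ :=
    hindep.integral_mul_eq_mul_integral intY.1 intε.1
  have hY2ε : ∫ ω, Y ω ^ 2 * ε ω ∂μ = (∫ ω, Y ω ^ 2 ∂μ) * ∫ ω, ε ω ∂μ :=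
    indep2.integral_mul_eq_mul_integral intY2.1 intε.1
  have hY2ε2 : ∫ ω, Y ω ^ 2 * ε ω ^ 2 ∂μ = (∫ ω, Y ω ^ 2 ∂μ) * ∫ ω, ε ω ^ 2 ∂μ :=
    indep22.integral_mul_eq_mul_integral intY2.1 intε2.1
  have intYε : Integrable (fun ω => Y ω * ε ω) μ := hindep.integrable_mul intY intε
  have intY2ε : Integrable (fun ω => Y ω ^ 2 * ε ω) μ := indep2.integrable_mul intY2 intε
  have intY2ε2 : Integrable (fun ω => Y ω ^ 2 * ε ω ^ 2) μ := indep22.integrable_mul intY2 intε2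
  have memεY : MemLp (fun ω => ε ω * Y ω) 2 μ := by
    refine (memLp_two_iff_integrable_sq (f := fun ω => ε ω * Y ω) (hεm2.1.mul hY.1)).mpr ?_
    have h : (fun ω => (ε ω * Y ω) ^ 2) = fun ω => Y ω ^ 2 * ε ω ^ 2 := by funext ω; ring
    rw [h]; exact intY2ε2
  have memX : MemLp (fun ω => (r + a * ε ω) * Y ω) 2 μ := by
    have h : (fun ω => (r + a * ε ω) * Y ω) = fun ω => r * Y ω + a * (ε ω * Y ω) := by
      funext ω; ring
    rw [h]; exact (hY.const_mul r).add (memεY.const_mul a)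
  rw [variance_eq_sub memX, variance_eq_sub hY]
  have p1 : (fun ω => (r + a * ε ω) * Y ω) ^ 2 = fun ω => ((r + a * ε ω) * Y ω) ^ 2 := rfl
  have p2 : Y ^ 2 = fun ω => Y ω ^ 2 := rfl
  rw [p1, p2]
  have hEX : ∫ ω, (r + a * ε ω) * Y ω ∂μ = r * ∫ ω, Y ω ∂μ := by
    have h : (fun ω => (r + a * ε ω) * Y ω) = fun ω => r * Y ω + a * (Y ω * ε ω) := by
      funext ω; ring
    have i1 : Integrable (fun ω => r * Y ω) μ := intY.const_mul r
    have i2 : Integrable (fun ω => a * (Y ω * ε ω)) μ := intYε.const_mul a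
    rw [h, integral_add i1 i2, integral_const_mul, integral_const_mul, hYε, Eε]
    ring
  have hEX2 : ∫ ω, ((r + a * ε ω) * Y ω) ^ 2 ∂μ
      = r ^ 2 * ∫ ω, Y ω ^ 2 ∂μ + a ^ 2 * ∫ ω, Y ω ^ 2 ∂μ := by
    have h : (fun ω => ((r + a * ε ω) * Y ω) ^ 2)
        = fun ω => r ^ 2 * Y ω ^ 2
            + ((2 * r * a) * (Y ω ^ 2 * ε ω) + a ^ 2 * (Y ω ^ 2 * ε ω ^ 2)) := by
      funext ω; ring
    have i1 : Integrable (fun ω => r ^ 2 * Y ω ^ 2) μ := intY2.const_mul _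
    have i2 : Integrable (fun ω => (2 * r * a) * (Y ω ^ 2 * ε ω)) μ := intY2ε.const_mul _
    have i3 : Integrable (fun ω => a ^ 2 * (Y ω ^ 2 * ε ω ^ 2)) μ := intY2ε2.const_mul _
    have i23 : Integrable
        (fun ω => (2 * r * a) * (Y ω ^ 2 * ε ω) + a ^ 2 * (Y ω ^ 2 * ε ω ^ 2)) μ := i2.add i3
    rw [h, integral_add i1 i23, integral_add i2 i3,
      integral_const_mul, integral_const_mul, integral_const_mul, hY2ε, hY2ε2, Eε, Eε2]
    ring
  rw [hEX, hEX2]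
  ring


/-- (Noise injection on the target return is equivalent to an L2 output regularization.)
Let `ε` be standard normal, `Y` square-integrable and independent of `ε`, and
`Z = r + c σ̂ √|r| ε` the noisified target return. Then
`Var(Z·Y) = r² Var(Y) + c² σ̂² |r| E[Y²]`; in particular, for deterministic `Y = π`,
`Var(Z·π) = c² σ̂² |r| π²`. -/
theorem target_noise_is_output_regularization {Ω : Type*} [MeasurableSpace Ω]
    (μ : Measure Ω) [IsProbabilityMeasure μ]
    (r c σhat : ℝ) (hc : 0 ≤ c) (hσhat : 0 ≤ σhat)
    (ε Y : Ω → ℝ) (hε : Measurable ε)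
    (hεmap : Measure.map ε μ = gaussianReal 0 1)
    (hY : MemLp Y 2 μ) (hindep : IndepFun Y ε μ) :
    variance (fun ω => (r + c * σhat * Real.sqrt |r| * ε ω) * Y ω) μ
      = r ^ 2 * variance Y μ + c ^ 2 * σhat ^ 2 * |r| * ∫ ω, (Y ω) ^ 2 ∂μ ∧
    ∀ π : ℝ,
      variance (fun ω => (r + c * σhat * Real.sqrt |r| * ε ω) * π) μ
        = c ^ 2 * σhat ^ 2 * |r| * π ^ 2 := by
  have ha : (c * σhat * Real.sqrt |r|) ^ 2 = c ^ 2 * σhat ^ 2 * |r| := by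
    rw [mul_pow, mul_pow, Real.sq_sqrt (abs_nonneg r)]
  constructor
  · rw [noise_variance_aux μ r _ ε Y hε hεmap hY hindep, ha]
  · intro π
    rw [noise_variance_aux μ r _ ε (fun _ => π) hε hεmap (memLp_const π)
      (_root_.indepFun_const_left π ε), ha]
    have h0 : variance (fun _ : Ω => π) μ = 0 := by
      rw [variance_eq_sub (memLp_const π)]
      simp [Pi.pow_def, integral_const, measure_univ]
    rw [h0]
    simp [integral_const, measure_univ]
end
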